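/- Let g_n(t) = t^{N-1} e^{-a t}/(1 + e^{-b t})^{2r} with N a positive integer, a, b > 0, r ≥ 0, and let 1 ≤ m < n. Then the marginal density generator ĝ_m(u) = ∫_u^∞ (t-u)^{(n-m)/2 - 1} g_n(t) dt equals ∑_{j=0}^{N-1} binom(N-1,j) u^{N-1-j} e^{-au} · Γ((n-m)/2 + j)/b^{(n-m)/2 + j} · Φ*_{2r}(-e^{-bu}, (n-m)/2 + j, a/b) for every u > 0. -/

import Mathlib

open MeasureTheory Real Set

/-- Generalized Hurwitz-Lerch zeta function, integral representation. -/
noncomputable def PhiInt (v z s a : ℝ) : ℝ :=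
  (1 / Real.Gamma s) *
    ∫ t in Ioi (0:ℝ), t ^ (s - 1) * Real.exp (-a * t) / (1 - z * Real.exp (-t)) ^ v

theorem gl_shiftIoi (f : ℝ → ℝ) (u : ℝ) :
    ∫ t in Ioi u, f t = ∫ x in Ioi (0:ℝ), f (x + u) := by
  rw [← integral_indicator measurableSet_Ioi, ← integral_indicator measurableSet_Ioi,
    ← integral_add_right_eq_self (fun t => (Ioi u).indicator f t) u]
  congr 1
  ext x
  rw [indicator, indicator]
  simp [mem_Ioi, lt_add_iff_pos_left]

theorem gl_phi_eq (s a b w v : ℝ) (hs : 0 < s) (hb : 0 < b) :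
    Real.Gamma s / b ^ s * PhiInt v (-Real.exp (-b * w)) s (a / b)
      = ∫ x in Ioi (0:ℝ), x ^ (s - 1) * Real.exp (-a * x) /
          (1 + Real.exp (-b * (w + x))) ^ v := by
  unfold PhiInt
  have hG := Real.Gamma_pos_of_pos hs
  set J := ∫ x in Ioi (0:ℝ), x ^ (s - 1) * Real.exp (-a * x) /
          (1 + Real.exp (-b * (w + x))) ^ v with hJ
  have key : (∫ t in Ioi (0:ℝ), t ^ (s - 1) * Real.exp (-(a/b) * t) /
        (1 - (-Real.exp (-b * w)) * Real.exp (-t)) ^ v) = b ^ s * J := by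
    have h := integral_comp_mul_left_Ioi
      (fun t => t ^ (s - 1) * Real.exp (-(a/b) * t) /
        (1 - (-Real.exp (-b * w)) * Real.exp (-t)) ^ v) 0 hb
    rw [mul_zero, smul_eq_mul] at h
    have h2 : (∫ x in Ioi (0:ℝ), (fun t => t ^ (s - 1) * Real.exp (-(a/b) * t) /
        (1 - (-Real.exp (-b * w)) * Real.exp (-t)) ^ v) (b * x)) = b ^ (s-1) * J := by
      rw [hJ, ← integral_const_mul]
      refine setIntegral_congr_fun measurableSet_Ioi (fun x hx => ?_)
      have hx0 : (0:ℝ) < x := hx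
      have h1 : (b * x) ^ (s - 1) = b ^ (s-1) * x ^ (s-1) :=
        Real.mul_rpow hb.le hx0.le
      have h2 : Real.exp (-(a/b) * (b * x)) = Real.exp (-a * x) := by
        congr 1; field_simp
      have h3 : (1 : ℝ) - (-Real.exp (-b * w)) * Real.exp (-(b*x))
          = 1 + Real.exp (-b * (w + x)) := by
        rw [neg_mul, neg_mul, ← Real.exp_add]; ring_nf
      simp only
      rw [h1, h2, h3]; ring
    rw [h2] at h
    have hb' : (b:ℝ) ≠ 0 := hb.ne'
    have hfin : (∫ t in Ioi (0:ℝ), t ^ (s - 1) * Real.exp (-(a/b) * t) /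
        (1 - (-Real.exp (-b * w)) * Real.exp (-t)) ^ v) = b * (b ^ (s-1) * J) := by
      rw [h]; field_simp
    rw [hfin, ← mul_assoc]
    congr 1
    rw [show b * b ^ (s-1) = b ^ (1:ℝ) * b ^ (s-1) by rw [Real.rpow_one],
      ← Real.rpow_add hb]
    norm_num
  rw [key]
  field_simp

theorem gl_integ_aux (s a b w v : ℝ) (hs : 0 < s) (ha : 0 < a) (hv : 0 ≤ v) :
    IntegrableOn (fun x : ℝ => x ^ (s - 1) * Real.exp (-a * x) /
      (1 + Real.exp (-b * (w + x))) ^ v) (Ioi 0) := by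
  have base : IntegrableOn (fun x : ℝ => x ^ (s - 1) * Real.exp (-a * x)) (Ioi 0) := by
    simpa [Real.rpow_one] using
      integrableOn_rpow_mul_exp_neg_mul_rpow (p := 1) (by linarith : (-1:ℝ) < s - 1) one_pos ha
  refine base.mono' ?_ ?_
  · apply Measurable.aestronglyMeasurable
    fun_prop
  · filter_upwards [ae_restrict_mem measurableSet_Ioi] with x hx
    have hx0 : (0:ℝ) < x := hx
    have hd : (1:ℝ) ≤ (1 + Real.exp (-b * (w + x))) ^ v :=
      Real.one_le_rpow (by linarith [Real.exp_pos (-b * (w + x))]) hv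
    have hnum : 0 ≤ x ^ (s - 1) * Real.exp (-a * x) := by positivity
    rw [Real.norm_eq_abs, abs_of_nonneg (by positivity)]
    calc x ^ (s - 1) * Real.exp (-a * x) / (1 + Real.exp (-b * (w + x))) ^ v
        ≤ x ^ (s - 1) * Real.exp (-a * x) / 1 := by
          apply div_le_div_of_nonneg_left hnum one_pos hd
      _ = x ^ (s - 1) * Real.exp (-a * x) := by rw [div_one]

/-- Marginal density generator of the GL generator g_n(t) = t^{N-1}e^{-at}/(1+e^{-bt})^{2r}. -/
theorem gl_marginal_generator (n m N : ℕ) (hm : 1 ≤ m) (hmn : m < n) (hN : 0 < N)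
    (a b r : ℝ) (ha : 0 < a) (hb : 0 < b) (hr : 0 ≤ r) (u : ℝ) (hu : 0 < u) :
    ∫ t in Ioi u, (t - u) ^ (((n : ℝ) - m) / 2 - 1) *
        (t ^ (N - 1) * Real.exp (-a * t) / (1 + Real.exp (-b * t)) ^ (2 * r))
      = ∑ j ∈ Finset.range N,
          (Nat.choose (N - 1) j : ℝ) * u ^ (N - 1 - j) * Real.exp (-a * u) *
            (Real.Gamma (((n : ℝ) - m) / 2 + j) / b ^ (((n : ℝ) - m) / 2 + (j : ℝ))) *
            PhiInt (2 * r) (-Real.exp (-b * u)) (((n : ℝ) - m) / 2 + j) (a / b) := by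
  set s : ℝ := ((n : ℝ) - m) / 2 with hsdef
  have hs : 0 < s := by
    have : (m : ℝ) < n := by exact_mod_cast hmn
    simp only [hsdef]; linarith
  have hsj : ∀ j : ℕ, 0 < s + j := fun j => by positivity
  have hv : (0:ℝ) ≤ 2 * r := by linarith
  -- shift the integral
  rw [gl_shiftIoi]
  -- pointwise expansion
  have hEq : EqOn
      (fun x : ℝ => (x + u - u) ^ (s - 1) *
        ((x + u) ^ (N - 1) * Real.exp (-a * (x + u)) /
          (1 + Real.exp (-b * (x + u))) ^ (2 * r)))
      (fun x : ℝ => ∑ j ∈ Finset.range N,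
        (Nat.choose (N - 1) j : ℝ) * u ^ (N - 1 - j) * Real.exp (-a * u) *
          (x ^ (s + j - 1) * Real.exp (-a * x) /
            (1 + Real.exp (-b * (u + x))) ^ (2 * r)))
      (Ioi 0) := by
    intro x hx
    have hx0 : (0:ℝ) < x := hx
    simp only
    have hexpand : (x + u) ^ (N - 1)
        = ∑ j ∈ Finset.range N, x ^ j * u ^ (N - 1 - j) * (Nat.choose (N - 1) j : ℝ) := by
      rw [add_pow]
      rw [show N - 1 + 1 = N from Nat.succ_pred_eq_of_pos hN]
    rw [hexpand, Finset.sum_mul, Finset.sum_div, Finset.mul_sum]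
    refine Finset.sum_congr rfl (fun j hj => ?_)
    have hxp : x ^ (s - 1) * x ^ j = x ^ (s + j - 1) := by
      rw [← Real.rpow_natCast x j, ← Real.rpow_add hx0]
      ring_nf
    have he : Real.exp (-a * (x + u)) = Real.exp (-a * x) * Real.exp (-a * u) := by
      rw [← Real.exp_add]; ring_nf
    have hxy : x + u - u = x := by ring
    have hc : (1 + Real.exp (-b * (x + u))) ^ (2 * r)
        = (1 + Real.exp (-b * (u + x))) ^ (2 * r) := by rw [add_comm x u]
    rw [hxy, he, hc]
    field_simp
    rw [← hxp]
    ring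
  rw [setIntegral_congr_fun measurableSet_Ioi hEq]
  -- swap sum and integral
  have hInt : ∀ j ∈ Finset.range N, IntegrableOn
      (fun x : ℝ => (Nat.choose (N - 1) j : ℝ) * u ^ (N - 1 - j) * Real.exp (-a * u) *
        (x ^ (s + j - 1) * Real.exp (-a * x) /
          (1 + Real.exp (-b * (u + x))) ^ (2 * r))) (Ioi 0) := by
    intro j _
    exact (gl_integ_aux (s + j) a b u (2 * r) (hsj j) ha hv).const_mul _
  rw [integral_finset_sum _ hInt]
  refine Finset.sum_congr rfl (fun j hj => ?_)
  rw [integral_const_mul]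
  rw [show (fun x : ℝ => x ^ (s + j - 1) * Real.exp (-a * x) /
      (1 + Real.exp (-b * (u + x))) ^ (2 * r))
    = (fun x : ℝ => x ^ ((s + j) - 1) * Real.exp (-a * x) /
      (1 + Real.exp (-b * (u + x))) ^ (2 * r)) from rfl]
  rw [← gl_phi_eq (s + j) a b u (2 * r) (hsj j) hb]
  ring
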